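/- Let (K, δ) be a differential field of characteristic zero with no element z ∈ K satisfying δ(z) = 1. Let L = K(w) be a purely transcendental extension with δ_L extending δ and δ_L(w) = 1. Let A_K and A_L denote the sets {a : δ(y) = nay has a nonzero solution in K (resp. L) for some n ∈ ℕ}. Then A_K = A_L ∩ K. -/

import Mathlib

open Polynomial

namespace Stmt13Aux

variable {K : Type*} [Field K]

/-- coefficient-wise application of `δ` -/
noncomputable def Sδ (δ : K → K) (p : K[X]) : K[X] :=
  p.sum fun i a => Polynomial.C (δ a) * Polynomial.X ^ i

/-- the induced derivation on polynomials -/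
noncomputable def Tδ (δ : K → K) (p : K[X]) : K[X] :=
  Sδ δ p + Polynomial.derivative p

lemma delta_zero (δ : K → K) (hadd : ∀ a b : K, δ (a + b) = δ a + δ b) : δ 0 = 0 := by
  have h := hadd 0 0
  rw [add_zero] at h
  exact (left_eq_add.mp h)

lemma delta_one (δ : K → K) (hmul : ∀ a b : K, δ (a * b) = δ a * b + a * δ b) : δ 1 = 0 := by
  have h := hmul 1 1
  rw [mul_one, mul_one, one_mul] at h
  exact (left_eq_add.mp h)

lemma coeff_Sδ (δ : K → K) (h0 : δ 0 = 0) (p : K[X]) (k : ℕ) :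
    (Sδ δ p).coeff k = δ (p.coeff k) := by
  rw [Sδ, Polynomial.sum, Polynomial.finset_sum_coeff]
  simp only [Polynomial.coeff_C_mul, Polynomial.coeff_X_pow, mul_ite, mul_one, mul_zero]
  rw [Finset.sum_ite_eq p.support k (fun i => δ (p.coeff i))]
  by_cases hk : k ∈ p.support
  · simp [hk]
  · simp [hk, Polynomial.notMem_support_iff.mp hk, h0]

lemma coeff_Tδ (δ : K → K) (h0 : δ 0 = 0) (p : K[X]) (k : ℕ) :
    (Tδ δ p).coeff k = δ (p.coeff k) + p.coeff (k + 1) * (k + 1) := by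
  rw [Tδ, Polynomial.coeff_add, coeff_Sδ δ h0, Polynomial.coeff_derivative]

lemma natDegree_Tδ_le (δ : K → K) (h0 : δ 0 = 0) (p : K[X]) :
    (Tδ δ p).natDegree ≤ p.natDegree := by
  rw [Polynomial.natDegree_le_iff_coeff_eq_zero]
  intro N hN
  rw [coeff_Tδ δ h0, Polynomial.coeff_eq_zero_of_natDegree_lt hN,
    Polynomial.coeff_eq_zero_of_natDegree_lt (lt_of_lt_of_le hN (Nat.le_succ N)), h0]
  ring

lemma coeff_Tδ_natDegree (δ : K → K) (h0 : δ 0 = 0) (p : K[X]) :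
    (Tδ δ p).coeff p.natDegree = δ p.leadingCoeff := by
  rw [coeff_Tδ δ h0, Polynomial.coeff_natDegree_succ_eq_zero, Polynomial.leadingCoeff]
  ring

lemma Tδ_C (δ : K → K) (h0 : δ 0 = 0) (a : K) : Tδ δ (C a) = C (δ a) := by
  ext k
  rw [coeff_Tδ δ h0]
  rcases k with _ | k
  · simp
  · simp [Polynomial.coeff_C, h0]

lemma Tδ_add (δ : K → K) (hadd : ∀ a b : K, δ (a + b) = δ a + δ b) (p q : K[X]) :
    Tδ δ (p + q) = Tδ δ p + Tδ δ q := by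
  have h0 := delta_zero δ hadd
  ext k
  simp only [Polynomial.coeff_add, coeff_Tδ δ h0, hadd]
  ring

lemma Tδ_mul_X (δ : K → K) (h0 : δ 0 = 0) (p : K[X]) :
    Tδ δ (p * X) = Tδ δ p * X + p := by
  ext k
  rcases k with _ | k
  · simp [coeff_Tδ δ h0, Polynomial.coeff_mul_X, h0, Polynomial.mul_coeff_zero]
  · simp only [coeff_Tδ δ h0, Polynomial.coeff_mul_X, Polynomial.coeff_add]
    push_cast
    ring

lemma algMap_Tδ (δ : K → K)
    (hadd : ∀ a b : K, δ (a + b) = δ a + δ b)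
    (δL : RatFunc K → RatFunc K)
    (hLadd : ∀ x y : RatFunc K, δL (x + y) = δL x + δL y)
    (hLmul : ∀ x y : RatFunc K, δL (x * y) = δL x * y + x * δL y)
    (hLcomp : ∀ a : K, δL (algebraMap K (RatFunc K) a) = algebraMap K (RatFunc K) (δ a))
    (hw : δL RatFunc.X = 1) (p : K[X]) :
    δL (algebraMap K[X] (RatFunc K) p) = algebraMap K[X] (RatFunc K) (Tδ δ p) := by
  have h0 := delta_zero δ hadd
  induction p using Polynomial.induction_on with
  | C a =>
      rw [Tδ_C δ h0, RatFunc.algebraMap_C, RatFunc.algebraMap_C]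
      exact hLcomp a
  | add p q hp hq =>
      rw [map_add, hLadd, hp, hq, Tδ_add δ hadd, map_add]
  | monomial n a ih =>
      have hX : (C a * X ^ (n + 1) : K[X]) = (C a * X ^ n) * X := by ring
      rw [hX, map_mul, hLmul, ih, RatFunc.algebraMap_X, hw, Tδ_mul_X δ h0, map_add]
      simp only [map_mul, RatFunc.algebraMap_X]
      ring

end Stmt13Aux

open Stmt13Aux in
/-- Let `(K, δ)` be a differential field of characteristic zero with no `z ∈ K`
satisfying `δ(z) = 1`, and let `L = K(w)` be the rational function field with the derivation
`δ_L` extending `δ` and `δ_L(w) = 1`. Then `A_K = A_L ∩ K`, where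
`A_K = {a : δ(y) = n a y has a nonzero solution in K for some n ≥ 1}` and similarly for `A_L`. -/
theorem stmt13 {K : Type*} [Field K] [CharZero K]
    (δ : K → K)
    (hadd : ∀ a b : K, δ (a + b) = δ a + δ b)
    (hmul : ∀ a b : K, δ (a * b) = δ a * b + a * δ b)
    (hno1 : ∀ z : K, δ z ≠ 1)
    (δL : RatFunc K → RatFunc K)
    (hLadd : ∀ x y : RatFunc K, δL (x + y) = δL x + δL y)
    (hLmul : ∀ x y : RatFunc K, δL (x * y) = δL x * y + x * δL y)
    (hLcomp : ∀ a : K, δL (algebraMap K (RatFunc K) a) = algebraMap K (RatFunc K) (δ a))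
    (hw : δL RatFunc.X = 1) :
    ∀ a : K,
      (∃ n : ℕ, 0 < n ∧ ∃ y : K, y ≠ 0 ∧ δ y = (n : K) * a * y) ↔
        (∃ n : ℕ, 0 < n ∧ ∃ y : RatFunc K, y ≠ 0 ∧
          δL y = (n : RatFunc K) * algebraMap K (RatFunc K) a * y) := by
  intro a
  have h0 : δ 0 = 0 := delta_zero δ hadd
  constructor
  · rintro ⟨n, hn, y, hy0, hy⟩
    refine ⟨n, hn, algebraMap K (RatFunc K) y, ?_, ?_⟩
    · simpa using hy0
    · rw [hLcomp, hy]
      push_cast [map_mul]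
      ring
  · rintro ⟨n, hn, y, hy0, hy⟩
    set c : K := (n : K) * a with hc
    set p : K[X] := y.num with hp
    set q : K[X] := y.denom with hq
    have hp0 : p ≠ 0 := RatFunc.num_ne_zero hy0
    have hq0 : q ≠ 0 := y.denom_ne_zero
    have hqR : algebraMap K[X] (RatFunc K) q ≠ 0 := RatFunc.algebraMap_ne_zero hq0
    have hyq : algebraMap K[X] (RatFunc K) p = y * algebraMap K[X] (RatFunc K) q := by
      rw [← RatFunc.num_div_denom y, div_mul_cancel₀ _ hqR]
    have hcR : algebraMap K[X] (RatFunc K) (C c) =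
        (n : RatFunc K) * algebraMap K (RatFunc K) a := by
      rw [RatFunc.algebraMap_C, ← RatFunc.algebraMap_eq_C, hc, map_mul, map_natCast]
    have hpoly : Tδ δ p * q = C c * p * q + p * Tδ δ q := by
      apply RatFunc.algebraMap_injective K
      have e1 : ∀ r s : K[X], algebraMap K[X] (RatFunc K) (r * s) =
          algebraMap K[X] (RatFunc K) r * algebraMap K[X] (RatFunc K) s :=
        fun r s => map_mul _ r s
      have e2 : ∀ r s : K[X], algebraMap K[X] (RatFunc K) (r + s) =
          algebraMap K[X] (RatFunc K) r + algebraMap K[X] (RatFunc K) s :=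
        fun r s => map_add _ r s
      rw [e1, e2, e1, e1, e1,
        ← algMap_Tδ δ hadd δL hLadd hLmul hLcomp hw,
        ← algMap_Tδ δ hadd δL hLadd hLmul hLcomp hw, hcR, hyq, hLmul, hy]
      ring
    have hcoeff := congrArg (fun r => r.coeff (p.natDegree + q.natDegree)) hpoly
    simp only [Polynomial.coeff_add] at hcoeff
    rw [Polynomial.coeff_mul_add_eq_of_natDegree_le (natDegree_Tδ_le δ h0 p) le_rfl,
      Polynomial.coeff_mul_add_eq_of_natDegree_le le_rfl (natDegree_Tδ_le δ h0 q),
      coeff_Tδ_natDegree δ h0, coeff_Tδ_natDegree δ h0, mul_assoc (C c),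
      Polynomial.coeff_C_mul, Polynomial.coeff_mul_degree_add_degree,
      Polynomial.coeff_natDegree, Polynomial.coeff_natDegree] at hcoeff
    set P : K := p.leadingCoeff with hP
    set Q : K := q.leadingCoeff with hQ
    have hP0 : P ≠ 0 := Polynomial.leadingCoeff_ne_zero.mpr hp0
    have hQ0 : Q ≠ 0 := Polynomial.leadingCoeff_ne_zero.mpr hq0
    -- hcoeff : δ P * Q = c * (P * Q) + P * δ Q
    have hQinv : δ Q⁻¹ = -(δ Q) * Q⁻¹ * Q⁻¹ := by
      have h := hmul Q Q⁻¹
      rw [mul_inv_cancel₀ hQ0, delta_one δ hmul] at h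
      field_simp at h ⊢
      linear_combination -h
    refine ⟨n, hn, P * Q⁻¹, mul_ne_zero hP0 (inv_ne_zero hQ0), ?_⟩
    rw [hmul, hQinv, ← hc]
    field_simp
    linear_combination hcoeff + P * Q * hc
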